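/- Every CSR game with sum utilities in which the access cost function d is symmetric (d(i,j) = d(j,i) for all i,j) and the object preferences are binary (r(i,α) ∈ {0,1} for all i,α) has a pure Nash equilibrium; moreover, the game has the finite improvement property: there is no infinite sequence of placements P^0, P^1, P^2, … in which each P^{t+1} is obtained from P^t by a single node i changing its stored object so that cost_i(P^{t+1}) < cost_i(P^t). -/

import Mathlib

open Finset

/-- Access cost of node `i` for object `α` under placement `P`. -/
noncomputable def accessCost {V O : Type*} [Fintype V] [DecidableEq O]
    (d : V → V → ℝ) (D : ℝ) (P : V → O) (i : V) (α : O) : ℝ :=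
  haveI := Classical.decEq ℝ
  (insert D ((Finset.univ.filter (fun j => P j = α)).image (d i))).min'
    (Finset.insert_nonempty _ _)

/-- Total cost of node `i` under placement `P` (sum utilities). -/
noncomputable def nodeCost {V O : Type*} [Fintype V] [Fintype O] [DecidableEq O]
    (d : V → V → ℝ) (r : V → O → ℝ) (D : ℝ) (P : V → O) (i : V) : ℝ :=
  ∑ α : O, r i α * accessCost d D P i α

namespace CSRaux
set_option linter.unusedSectionVars false

private lemma min'_congr {s t : Finset ℝ} (h : s = t) (hs : s.Nonempty) (ht : t.Nonempty) :
    s.min' hs = t.min' ht := by subst h; rfl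

variable {V O : Type*} [Fintype V] [Fintype O] [DecidableEq V] [DecidableEq O]

/-- Distance to nearest *other* node holding the same object as `j`, capped at `D`. -/
noncomputable def Ecost (d : V → V → ℝ) (D : ℝ) (P : V → O) (j : V) : ℝ :=
  haveI := Classical.decEq ℝ
  (insert D ((Finset.univ.filter (fun k => k ≠ j ∧ P k = P j)).image (d j))).min'
    (Finset.insert_nonempty _ _)

/-- The "utility" node `j` derives from its own cache. -/
noncomputable def Uval (d : V → V → ℝ) (r : V → O → ℝ) (D : ℝ) (P : V → O) (j : V) : ℝ :=
  r j (P j) * Ecost d D P j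

lemma Ecost_nonneg (d : V → V → ℝ) (D : ℝ) (hd : ∀ i j, 0 ≤ d i j) (hD0 : 0 ≤ D)
    (P : V → O) (j : V) : 0 ≤ Ecost d D P j := by
  classical
  apply Finset.le_min'
  intro y hy
  rcases Finset.mem_insert.1 hy with h | h
  · exact h ▸ hD0
  · rcases Finset.mem_image.1 h with ⟨k, _, hk⟩
    exact hk ▸ hd j k

lemma Ecost_le_D (d : V → V → ℝ) (D : ℝ) (P : V → O) (j : V) : Ecost d D P j ≤ D := by
  classical
  exact Finset.min'_le _ _ (Finset.mem_insert_self _ _)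

lemma Uval_nonneg (d : V → V → ℝ) (r : V → O → ℝ) (D : ℝ) (hd : ∀ i j, 0 ≤ d i j)
    (hr : ∀ i α, 0 ≤ r i α) (hD0 : 0 ≤ D) (P : V → O) (j : V) : 0 ≤ Uval d r D P j :=
  mul_nonneg (hr _ _) (Ecost_nonneg d D hd hD0 P j)

lemma accessCost_self (d : V → V → ℝ) (D : ℝ) (hd : ∀ i j, 0 ≤ d i j) (hdiag : ∀ i, d i i = 0)
    (hD0 : 0 ≤ D) (P : V → O) (i : V) : accessCost d D P i (P i) = 0 := by
  classical
  apply le_antisymm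
  · apply Finset.min'_le
    apply Finset.mem_insert_of_mem
    have : i ∈ Finset.univ.filter (fun j => P j = P i) := by simp
    simpa [hdiag i] using Finset.mem_image_of_mem (d i) this
  · apply Finset.le_min'
    intro y hy
    rcases Finset.mem_insert.1 hy with h | h
    · exact h ▸ hD0
    · rcases Finset.mem_image.1 h with ⟨k, _, hk⟩
      exact hk ▸ hd i k

/-- The access cost of `i` for an object `β` it does not hold equals the
`Ecost` of `i` after switching to `β`. -/
lemma accessCost_eq_Ecost_update (d : V → V → ℝ) (D : ℝ) (P : V → O) (i : V) (β : O)
    (hne : β ≠ P i) :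
    accessCost d D P i β = Ecost d D (Function.update P i β) i := by
  classical
  apply min'_congr
  congr 1
  congr 1
  ext k
  simp only [Finset.mem_filter, Finset.mem_univ, true_and, Function.update_self]
  constructor
  · intro hk
    have hki : k ≠ i := by rintro rfl; exact hne (by rw [hk])
    exact ⟨hki, by rw [Function.update_of_ne hki, hk]⟩
  · rintro ⟨hki, hk⟩
    rw [Function.update_of_ne hki] at hk
    exact hk

/-- Access cost to an object different from both old and new object of `i` is unchanged. -/
lemma accessCost_update_of_ne (d : V → V → ℝ) (D : ℝ) (P : V → O) (i : V) (β α : O)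
    (h1 : α ≠ β) (h2 : α ≠ P i) :
    accessCost d D (Function.update P i β) i α = accessCost d D P i α := by
  classical
  apply min'_congr
  congr 2
  ext k
  simp only [Finset.mem_filter, Finset.mem_univ, true_and]
  by_cases hk : k = i
  · subst hk; simp [Function.update_self, h1.symm, h2.symm, Ne.symm]
  · rw [Function.update_of_ne hk]

/-- A4: access cost of `i` under the new placement for its old object. -/
lemma accessCost_update_old (d : V → V → ℝ) (D : ℝ) (P : V → O) (i : V) (β : O)
    (hne : β ≠ P i) :
    accessCost d D (Function.update P i β) i (P i) = Ecost d D P i := by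
  classical
  have h1 : P i ≠ Function.update P i β i := by
    rw [Function.update_self]; exact fun h => hne h.symm
  have := accessCost_eq_Ecost_update d D (Function.update P i β) i (P i) h1
  rw [this]
  congr 1
  rw [Function.update_idem, Function.update_eq_self]

/-- The fundamental cost identity. -/
lemma cost_diff (d : V → V → ℝ) (r : V → O → ℝ) (D : ℝ)
    (hd : ∀ i j, 0 ≤ d i j) (hdiag : ∀ i, d i i = 0) (hD0 : 0 ≤ D)
    (P : V → O) (i : V) (β : O) (hne : β ≠ P i) :
    nodeCost d r D P i - nodeCost d r D (Function.update P i β) i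
      = Uval d r D (Function.update P i β) i - Uval d r D P i := by
  classical
  set P' := Function.update P i β with hP'
  have hsum : nodeCost d r D P i - nodeCost d r D P' i
      = ∑ α : O, (r i α * accessCost d D P i α - r i α * accessCost d D P' i α) := by
    rw [Finset.sum_sub_distrib]; rfl
  rw [hsum]
  have hvanish : ∀ α ∈ (Finset.univ : Finset O), α ∉ ({β, P i} : Finset O) →
      r i α * accessCost d D P i α - r i α * accessCost d D P' i α = 0 := by
    intro α _ hα
    simp only [Finset.mem_insert, Finset.mem_singleton, not_or] at hα
    rw [accessCost_update_of_ne d D P i β α hα.1 hα.2]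
    ring
  rw [← Finset.sum_subset (Finset.subset_univ ({β, P i} : Finset O)) hvanish]
  rw [Finset.sum_pair hne]
  have e1 : accessCost d D P' i β = 0 := by
    have : P' i = β := Function.update_self i β P
    rw [← this]; exact accessCost_self d D hd hdiag hD0 P' i
  have e2 : accessCost d D P i (P i) = 0 := accessCost_self d D hd hdiag hD0 P i
  have e3 : accessCost d D P i β = Ecost d D P' i := accessCost_eq_Ecost_update d D P i β hne
  have e4 : accessCost d D P' i (P i) = Ecost d D P i := accessCost_update_old d D P i β hne
  rw [e1, e2, e3, e4]
  have hU' : Uval d r D P' i = r i β * Ecost d D P' i := by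
    unfold Uval; rw [hP', Function.update_self]
  rw [hU']
  unfold Uval
  ring

lemma Ecost_le_D' (d : V → V → ℝ) (D : ℝ) (P : V → O) (j : V) : Ecost d D P j ≤ D :=
  Finset.min'_le _ _ (Finset.mem_insert_self _ _)

lemma Ecost_le_of_mem (d : V → V → ℝ) (D : ℝ) (P : V → O) (j k : V)
    (hk : k ≠ j) (hPk : P k = P j) : Ecost d D P j ≤ d j k := by
  classical
  apply Finset.min'_le
  apply Finset.mem_insert_of_mem
  exact Finset.mem_image_of_mem (d j) (by simp [hk, hPk])

/-- Neighbor lemma: for every `j ≠ i`, after `i` moves to `β`, the utility of `j`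
drops to at worst `min` of its old utility and the new `Ecost` of `i`. -/
lemma neighbor_bound (d : V → V → ℝ) (r : V → O → ℝ) (D : ℝ)
    (hd : ∀ i j, 0 ≤ d i j) (hr : ∀ i α, 0 ≤ r i α) (hD0 : 0 ≤ D)
    (hsym : ∀ i j, d i j = d j i) (hbin : ∀ i α, r i α = 0 ∨ r i α = 1)
    (P : V → O) (i : V) (β : O) (j : V) (hji : j ≠ i) :
    min (Uval d r D P j) (Ecost d D (Function.update P i β) i)
      ≤ Uval d r D (Function.update P i β) j := by
  classical
  set P' := Function.update P i β with hP'
  have hPj' : P' j = P j := Function.update_of_ne hji β P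
  by_cases hjβ : P j = β
  · -- j holds the new object β
    rcases hbin j (P j) with h0 | h1
    · have : Uval d r D P' j = 0 := by unfold Uval; rw [hPj', h0, zero_mul]
      rw [this]
      refine le_trans (min_le_left _ _) ?_
      unfold Uval; rw [h0, zero_mul]
    · have hUj : Uval d r D P j = Ecost d D P j := by unfold Uval; rw [h1, one_mul]
      have hUj' : Uval d r D P' j = Ecost d D P' j := by
        unfold Uval; rw [hPj', h1, one_mul]
      rw [hUj, hUj']
      apply Finset.le_min'
      intro y hy
      rcases Finset.mem_insert.1 hy with h | h
      · exact le_trans (min_le_left _ _) (le_trans (Ecost_le_D' d D P j) (h ▸ le_refl D))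
      · rcases Finset.mem_image.1 h with ⟨k, hkmem, hk⟩
        simp only [Finset.mem_filter, Finset.mem_univ, true_and] at hkmem
        obtain ⟨hkj, hPk⟩ := hkmem
        by_cases hki : k = i
        · -- the new holder is i itself; use symmetry
          refine le_trans (min_le_right _ _) ?_
          have hmem : j ∈ Finset.univ.filter (fun m => m ≠ i ∧ P' m = P' i) := by
            simp only [Finset.mem_filter, Finset.mem_univ, true_and]
            refine ⟨hji, ?_⟩
            rw [hPj', hP', Function.update_self]
            exact hjβ
          have h2 : Ecost d D P' i ≤ d i j :=
            Finset.min'_le _ _ (Finset.mem_insert_of_mem (Finset.mem_image_of_mem (d i) hmem))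
          rw [← hk, hki, hsym j i]
          exact h2
        · refine le_trans (min_le_left _ _) ?_
          rw [← hk]
          apply Ecost_le_of_mem d D P j k hkj
          rw [hP', Function.update_of_ne hki, Function.update_of_ne hji] at hPk
          exact hPk
  · -- j does not hold β : utility can only go up
    refine le_trans (min_le_left _ _) ?_
    unfold Uval
    rw [hPj']
    apply mul_le_mul_of_nonneg_left ?_ (hr j (P j))
    apply Finset.min'_subset
    apply Finset.insert_subset_insert
    apply Finset.image_subset_image
    intro k hk
    simp only [Finset.mem_filter, Finset.mem_univ, true_and] at hk ⊢
    obtain ⟨hkj, hPk⟩ := hk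
    rw [hPj'] at hPk
    have hki : k ≠ i := by
      intro h
      rw [h, hP', Function.update_self] at hPk
      exact hjβ hPk.symm
    rw [hP', Function.update_of_ne hki] at hPk
    exact ⟨hkj, hPk⟩


/-- The (finite) set of all possible utility values. -/
noncomputable def Tset (d : V → V → ℝ) (D : ℝ) : Finset ℝ :=
  haveI := Classical.decEq ℝ
  insert 0 (insert D ((Finset.univ : Finset (V × V)).image (fun p => d p.1 p.2)))

/-- Fast-decaying weights. -/
noncomputable def wf (d : V → V → ℝ) (D : ℝ) (t : ℝ) : ℝ :=
  ((Fintype.card V : ℝ) + 1) ^ ((Tset d D).filter (fun s => t < s)).card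

noncomputable def ff (d : V → V → ℝ) (D : ℝ) (u : ℝ) : ℝ :=
  -∑ t ∈ (Tset d D).filter (fun t => u ≤ t), wf d D t

lemma wf_pos (d : V → V → ℝ) (D : ℝ) (t : ℝ) : 0 < wf d D t := by
  unfold wf
  positivity

lemma ff_mono (d : V → V → ℝ) (D : ℝ) {u u' : ℝ} (h : u ≤ u') : ff d D u ≤ ff d D u' := by
  classical
  unfold ff
  apply neg_le_neg
  apply Finset.sum_le_sum_of_subset_of_nonneg
  · intro t ht
    simp only [Finset.mem_filter] at ht ⊢
    exact ⟨ht.1, le_trans h ht.2⟩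
  · intro t _ _
    exact (wf_pos d D t).le

lemma ff_gain (d : V → V → ℝ) (D : ℝ) {v a : ℝ} (hv : v ∈ Tset d D) (hva : v < a) :
    ff d D v + wf d D v ≤ ff d D a := by
  classical
  unfold ff
  have hsub : (Tset d D).filter (fun t => a ≤ t) ⊆ (Tset d D).filter (fun t => v ≤ t) := by
    intro t ht
    simp only [Finset.mem_filter] at ht ⊢
    exact ⟨ht.1, le_trans hva.le ht.2⟩
  have hsd := Finset.sum_sdiff (f := wf d D) hsub
  have hvmem : v ∈ (Tset d D).filter (fun t => v ≤ t) \ (Tset d D).filter (fun t => a ≤ t) := by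
    simp only [Finset.mem_sdiff, Finset.mem_filter]
    exact ⟨⟨hv, le_refl v⟩, fun h => absurd h.2 (not_le.2 hva)⟩
  have hle : wf d D v ≤ ∑ t ∈ (Tset d D).filter (fun t => v ≤ t) \
      (Tset d D).filter (fun t => a ≤ t), wf d D t :=
    Finset.single_le_sum (fun t _ => (wf_pos d D t).le) hvmem
  linarith

lemma ff_loss (d : V → V → ℝ) (D : ℝ) {v x y : ℝ} (hvy : v < y) :
    ff d D x - (∑ t ∈ (Tset d D).filter (fun t => v < t), wf d D t) ≤ ff d D y := by
  classical
  unfold ff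
  have h1 : (0:ℝ) ≤ ∑ t ∈ (Tset d D).filter (fun t => x ≤ t), wf d D t :=
    Finset.sum_nonneg (fun t _ => (wf_pos d D t).le)
  have h2 : ∑ t ∈ (Tset d D).filter (fun t => y ≤ t), wf d D t
      ≤ ∑ t ∈ (Tset d D).filter (fun t => v < t), wf d D t := by
    apply Finset.sum_le_sum_of_subset_of_nonneg
    · intro t ht
      simp only [Finset.mem_filter] at ht ⊢
      exact ⟨ht.1, lt_of_lt_of_le hvy ht.2⟩
    · intro t _ _; exact (wf_pos d D t).le
  linarith

/-- Key geometric estimate: the total weight above `v` times `card V` is less than `wf v`. -/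
lemma geom_bound (d : V → V → ℝ) (D : ℝ) {v : ℝ} (hv : v ∈ Tset d D) :
    (Fintype.card V : ℝ) * ∑ t ∈ (Tset d D).filter (fun t => v < t), wf d D t
      < wf d D v := by
  classical
  set T := Tset d D with hT
  set B : ℝ := (Fintype.card V : ℝ) + 1 with hB
  set c : ℝ → ℕ := fun t => (T.filter (fun s => t < s)).card with hc
  set k : ℕ := c v with hk
  have hanti : ∀ s t : ℝ, t ∈ T → s < t → c t < c s := by
    intro s t htT hst
    apply Finset.card_lt_card
    constructor
    · intro x hx
      simp only [Finset.mem_filter] at hx ⊢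
      exact ⟨hx.1, lt_trans hst hx.2⟩
    · intro hsub
      have : t ∈ T.filter (fun x => s < x) := by
        simp only [Finset.mem_filter]; exact ⟨htT, hst⟩
      have := hsub this
      simp only [Finset.mem_filter] at this
      exact lt_irrefl t this.2
  set A := T.filter (fun t => v < t) with hA
  have hwf : ∀ t, wf d D t = B ^ (c t) := fun t => rfl
  have hinj : ∀ x ∈ A, ∀ y ∈ A, c x = c y → x = y := by
    intro x hx y hy hxy
    simp only [hA, Finset.mem_filter] at hx hy
    rcases lt_trichotomy x y with h | h | h
    · exact absurd hxy (ne_of_gt (hanti x y hy.1 h))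
    · exact h
    · exact absurd hxy (ne_of_lt (hanti y x hx.1 h))
  have himg : ∑ t ∈ A, wf d D t = ∑ j ∈ A.image c, B ^ j := by
    rw [Finset.sum_image hinj]
    exact Finset.sum_congr rfl (fun t _ => hwf t)
  have hsubrange : A.image c ⊆ Finset.range k := by
    intro j hj
    rcases Finset.mem_image.1 hj with ⟨t, ht, rfl⟩
    simp only [hA, Finset.mem_filter] at ht
    exact Finset.mem_range.2 (hanti v t ht.1 ht.2)
  have hle : ∑ j ∈ A.image c, B ^ j ≤ ∑ j ∈ Finset.range k, B ^ j := by
    apply Finset.sum_le_sum_of_subset_of_nonneg hsubrange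
    intro j _ _
    positivity
  have hgeom : (∑ j ∈ Finset.range k, B ^ j) * (B - 1) = B ^ k - 1 := geom_sum_mul B k
  have hBn : B - 1 = (Fintype.card V : ℝ) := by simp [hB]
  have hsum_nonneg : (0:ℝ) ≤ ∑ j ∈ Finset.range k, B ^ j :=
    Finset.sum_nonneg (fun j _ => by positivity)
  have hfinal : (Fintype.card V : ℝ) * ∑ j ∈ Finset.range k, B ^ j = B ^ k - 1 := by
    rw [← hBn, mul_comm]; exact hgeom
  have hwfv : wf d D v = B ^ k := rfl
  have hcard_nonneg : (0:ℝ) ≤ (Fintype.card V : ℝ) := Nat.cast_nonneg _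
  calc (Fintype.card V : ℝ) * ∑ t ∈ A, wf d D t
      = (Fintype.card V : ℝ) * ∑ j ∈ A.image c, B ^ j := by rw [himg]
    _ ≤ (Fintype.card V : ℝ) * ∑ j ∈ Finset.range k, B ^ j :=
        mul_le_mul_of_nonneg_left hle hcard_nonneg
    _ = B ^ k - 1 := hfinal
    _ < B ^ k := by linarith
    _ = wf d D v := hwfv.symm

lemma Ecost_cases (d : V → V → ℝ) (D : ℝ) (P : V → O) (j : V) :
    Ecost d D P j = D ∨ ∃ k : V, Ecost d D P j = d j k := by
  classical
  have heq : Ecost d D P j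
      = (insert D ((Finset.univ.filter (fun k => k ≠ j ∧ P k = P j)).image (d j))).min'
        (Finset.insert_nonempty _ _) := by
    unfold Ecost
    apply min'_congr
    ext x
    simp [Finset.mem_insert]
  have h := Finset.min'_mem
    (insert D ((Finset.univ.filter (fun k => k ≠ j ∧ P k = P j)).image (d j)))
    (Finset.insert_nonempty _ _)
  rw [← heq] at h
  rcases Finset.mem_insert.1 h with h | h
  · exact Or.inl h
  · rcases Finset.mem_image.1 h with ⟨k, _, hk⟩
    exact Or.inr ⟨k, hk.symm⟩

lemma Uval_mem_Tset (d : V → V → ℝ) (r : V → O → ℝ) (D : ℝ)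
    (hbin : ∀ i α, r i α = 0 ∨ r i α = 1) (P : V → O) (j : V) :
    Uval d r D P j ∈ Tset d D := by
  classical
  rcases hbin j (P j) with h | h
  · have : Uval d r D P j = 0 := by unfold Uval; rw [h, zero_mul]
    rw [this]
    exact Finset.mem_insert_self _ _
  · have hU : Uval d r D P j = Ecost d D P j := by unfold Uval; rw [h, one_mul]
    rw [hU]
    rcases Ecost_cases d D P j with h | ⟨k, hk⟩
    · rw [h]
      exact Finset.mem_insert_of_mem (Finset.mem_insert_self _ _)
    · rw [hk]
      apply Finset.mem_insert_of_mem
      apply Finset.mem_insert_of_mem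
      exact Finset.mem_image.2 ⟨(j, k), Finset.mem_univ _, rfl⟩

/-- The ordinal potential. -/
noncomputable def Phi (d : V → V → ℝ) (r : V → O → ℝ) (D : ℝ) (P : V → O) : ℝ :=
  ∑ j, ff d D (Uval d r D P j)

/-- A strict unilateral improvement step strictly increases the potential. -/
lemma Phi_step [Nonempty V] (d : V → V → ℝ) (r : V → O → ℝ) (D : ℝ)
    (hd : ∀ i j, 0 ≤ d i j) (hdiag : ∀ i, d i i = 0)
    (hr : ∀ i α, 0 ≤ r i α) (hDd : ∀ i j, d i j ≤ D)
    (hsym : ∀ i j, d i j = d j i) (hbin : ∀ i α, r i α = 0 ∨ r i α = 1)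
    (P : V → O) (i : V) (β : O)
    (himp : nodeCost d r D (Function.update P i β) i < nodeCost d r D P i) :
    Phi d r D P < Phi d r D (Function.update P i β) := by
  classical
  have hD0 : (0:ℝ) ≤ D := by
    obtain ⟨j⟩ := ‹Nonempty V›
    exact le_trans (le_of_eq (hdiag j).symm) (hDd j j)
  have hne : β ≠ P i := by
    intro h
    rw [h, Function.update_eq_self] at himp
    exact lt_irrefl _ himp
  set P' := Function.update P i β with hP'
  have hdiff := cost_diff d r D hd hdiag hD0 P i β hne
  have hmov : Uval d r D P i < Uval d r D P' i := by
    rw [← hP'] at hdiff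
    have h0 : 0 < nodeCost d r D P i - nodeCost d r D P' i := by linarith
    rw [hdiff] at h0
    linarith
  have hr1 : r i β = 1 := by
    rcases hbin i β with h0 | h1
    · exfalso
      have hz : Uval d r D P' i = 0 := by
        unfold Uval
        rw [hP', Function.update_self, h0, zero_mul]
      have hnn := Uval_nonneg d r D hd hr hD0 P i
      rw [hz] at hmov
      linarith
    · exact h1
  have hUa : Uval d r D P' i = Ecost d D P' i := by
    unfold Uval
    rw [hP', Function.update_self, hr1, one_mul]
  have hva : Uval d r D P i < Ecost d D P' i := hUa ▸ hmov
  have hvT : Uval d r D P i ∈ Tset d D := Uval_mem_Tset d r D hbin P i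
  set v := Uval d r D P i with hv
  set L := ∑ t ∈ (Tset d D).filter (fun t => v < t), wf d D t with hLdef
  have hL0 : (0:ℝ) ≤ L := Finset.sum_nonneg (fun t _ => (wf_pos d D t).le)
  have key : ∀ j ∈ Finset.univ.erase i,
      ff d D (Uval d r D P j) - L ≤ ff d D (Uval d r D P' j) := by
    intro j hj
    have hji : j ≠ i := Finset.ne_of_mem_erase hj
    have hnb := neighbor_bound d r D hd hr hD0 hsym hbin P i β j hji
    rw [← hP'] at hnb
    by_cases hcase : Uval d r D P j ≤ Uval d r D P' j
    · have := ff_mono d D hcase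
      linarith
    · push_neg at hcase
      have hmin : min (Uval d r D P j) (Ecost d D P' i) = Ecost d D P' i := by
        rcases le_total (Uval d r D P j) (Ecost d D P' i) with h | h
        · exfalso
          rw [min_eq_left h] at hnb
          linarith
        · exact min_eq_right h
      rw [hmin] at hnb
      have hy : v < Uval d r D P' j := lt_of_lt_of_le hva hnb
      exact ff_loss d D hy
  have hgain : ff d D v + wf d D v ≤ ff d D (Uval d r D P' i) := by
    rw [hUa]
    exact ff_gain d D hvT hva
  have hsplit : ∀ Q : V → O, Phi d r D Q
      = ff d D (Uval d r D Q i) + ∑ j ∈ Finset.univ.erase i, ff d D (Uval d r D Q j) := by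
    intro Q
    exact (Finset.add_sum_erase Finset.univ (fun j => ff d D (Uval d r D Q j))
      (Finset.mem_univ i)).symm
  have hsum : ∑ j ∈ Finset.univ.erase i, (ff d D (Uval d r D P j) - L)
      ≤ ∑ j ∈ Finset.univ.erase i, ff d D (Uval d r D P' j) :=
    Finset.sum_le_sum key
  rw [Finset.sum_sub_distrib, Finset.sum_const, nsmul_eq_mul] at hsum
  have hcard : (((Finset.univ : Finset V).erase i).card : ℝ) ≤ (Fintype.card V : ℝ) := by
    have h1 := Finset.card_erase_of_mem (Finset.mem_univ i)
    rw [h1, Finset.card_univ]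
    exact Nat.cast_le.2 (Nat.sub_le _ _)
  have hcardL : (((Finset.univ : Finset V).erase i).card : ℝ) * L
      ≤ (Fintype.card V : ℝ) * L := mul_le_mul_of_nonneg_right hcard hL0
  have hgeo := geom_bound d D hvT
  rw [← hLdef] at hgeo
  rw [hsplit P, hsplit P']
  have hvv : Uval d r D P i = v := rfl
  rw [hvv]
  linarith
end CSRaux

/-- A CSR game with sum utilities on an undirected network (symmetric `d`) with
binary object preferences has a pure Nash equilibrium, and moreover it has the
finite improvement property: there is no infinite sequence of strict unilateral
improvement steps. -/
theorem undirected_binary_csr_equilibrium_and_FIP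
    {V O : Type*} [Fintype V] [Fintype O] [Nonempty V] [Nonempty O]
    [DecidableEq V] [DecidableEq O]
    (d : V → V → ℝ) (r : V → O → ℝ) (D : ℝ)
    (hd_nonneg : ∀ i j, 0 ≤ d i j) (hd_diag : ∀ i, d i i = 0)
    (hr_nonneg : ∀ i α, 0 ≤ r i α) (hD : ∀ i j, d i j ≤ D)
    (hsym : ∀ i j, d i j = d j i)
    (hbin : ∀ i α, r i α = 0 ∨ r i α = 1) :
    (∃ P : V → O, ∀ (i : V) (β : O),
      nodeCost d r D P i ≤ nodeCost d r D (Function.update P i β) i) ∧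
    ¬ ∃ seq : ℕ → V → O, ∀ t : ℕ, ∃ (i : V) (β : O),
        seq (t + 1) = Function.update (seq t) i β ∧
        nodeCost d r D (seq (t + 1)) i < nodeCost d r D (seq t) i := by
  classical
  constructor
  · obtain ⟨P, -, hmax⟩ := Finset.exists_max_image (Finset.univ : Finset (V → O))
      (CSRaux.Phi d r D) Finset.univ_nonempty
    refine ⟨P, fun i β => ?_⟩
    by_contra h
    push_neg at h
    have hstep := CSRaux.Phi_step d r D hd_nonneg hd_diag hr_nonneg hD hsym hbin P i β h
    exact absurd (hmax _ (Finset.mem_univ _)) (not_le.2 hstep)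
  · rintro ⟨seq, hseq⟩
    have hmono : StrictMono (fun t => CSRaux.Phi d r D (seq t)) := by
      apply strictMono_nat_of_lt_succ
      intro t
      obtain ⟨i, β, hupd, hlt⟩ := hseq t
      rw [hupd] at hlt
      have hstep := CSRaux.Phi_step d r D hd_nonneg hd_diag hr_nonneg hD hsym hbin
        (seq t) i β hlt
      rw [← hupd] at hstep
      exact hstep
    obtain ⟨t1, t2, hne, heq⟩ := Finite.exists_ne_map_eq_of_infinite seq
    exact hne (hmono.injective (by simp only [heq]))
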